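/- Let N and M be dual d-dimensional real vector spaces and let χ₁, χ₂ ∈ M be two non-proportional nonzero vectors. Let F ⊂ N be the simplicial cone generated by a basis γ₁,…,γ_d, and let φ : N → ℝ² be the map λ ↦ (⟨λ,χ₁⟩, ⟨λ,χ₂⟩). Then span(χ₁,χ₂)^⊥ ∩ F ≠ {0} if and only if 0 lies in the interior of conv(φ(γ₁),…,φ(γ_d)) or φ(F) = ℝ². More precisely: φ(F) = ℝ² if and only if 0 ∈ int conv(φ(γ₁),…,φ(γ_d)). -/

import Mathlib

set_option maxHeartbeats 1000000

/-- Auxiliary: a convex set containing `0`, `p`, `q` contains `s•p + t•q` for nonnegative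
weights with `s + t ≤ 1`. -/
lemma aux_combo {E : Type*} [AddCommGroup E] [Module ℝ E] {K : Set E} (hK : Convex ℝ K)
    (h0 : (0 : E) ∈ K) {p q : E} (hp : p ∈ K) (hq : q ∈ K) {s t : ℝ}
    (hs : 0 ≤ s) (ht : 0 ≤ t) (hst : s + t ≤ 1) : s • p + t • q ∈ K := by
  rcases eq_or_lt_of_le (add_nonneg hs ht) with h|h
  · have hs0 : s = 0 := by linarith
    have ht0 : t = 0 := by linarith
    simpa [hs0, ht0] using h0
  · have hm : (s / (s + t)) • p + (t / (s + t)) • q ∈ K :=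
      hK hp hq (div_nonneg hs h.le) (div_nonneg ht h.le)
        (by rw [← add_div, div_self h.ne'])
    have := hK hm h0 (a := s + t) (b := 1 - (s + t)) h.le (by linarith) (by ring)
    have heq : (s + t) • ((s / (s + t)) • p + (t / (s + t)) • q) + (1 - (s + t)) • (0 : E)
        = s • p + t • q := by
      rw [smul_zero, add_zero, smul_add, smul_smul, smul_smul,
        mul_div_cancel₀ _ h.ne', mul_div_cancel₀ _ h.ne']
    rwa [heq] at this

theorem stmt10 {N M : Type*} [AddCommGroup N] [Module ℝ N] [AddCommGroup M] [Module ℝ M]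
    {d : ℕ} (B : N →ₗ[ℝ] M →ₗ[ℝ] ℝ)
    (hB1 : ∀ n : N, (∀ m : M, B n m = 0) → n = 0)
    (hB2 : ∀ m : M, (∀ n : N, B n m = 0) → m = 0)
    (γ : Module.Basis (Fin d) ℝ N)
    (F : Set N) (hF : F = {v : N | ∃ a : Fin d → ℝ, (∀ i, 0 ≤ a i) ∧ v = ∑ i, a i • γ i})
    (χ₁ χ₂ : M) (h1 : χ₁ ≠ 0) (h2 : χ₂ ≠ 0)
    (hprop : ∀ c : ℝ, χ₂ ≠ c • χ₁)
    (φ : N → ℝ × ℝ) (hφ : φ = fun l => (B l χ₁, B l χ₂)) :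
    φ '' F = Set.univ ↔
      (0 : ℝ × ℝ) ∈ interior (convexHull ℝ (Set.range fun i : Fin d => φ (γ i))) := by
  subst hφ hF
  set p : Fin d → ℝ × ℝ := fun i => ((B (γ i)) χ₁, (B (γ i)) χ₂) with hp
  set K : Set (ℝ × ℝ) := convexHull ℝ (Set.range p) with hKdef
  have hK : Convex ℝ K := convex_convexHull ℝ _
  -- linearity of φ on nonnegative combinations
  have hlin : ∀ a : Fin d → ℝ,
      ((B (∑ i, a i • γ i)) χ₁, (B (∑ i, a i • γ i)) χ₂) = ∑ i, a i • p i := by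
    intro a
    have h1' : ∀ χ : M, (B (∑ i, a i • γ i)) χ = ∑ i, a i * (B (γ i)) χ := by
      intro χ
      simp [map_sum, LinearMap.sum_apply, map_smul, LinearMap.smul_apply, smul_eq_mul]
    refine Prod.ext ?_ ?_ <;> simp [h1', Prod.fst_sum, Prod.snd_sum, hp]
  constructor
  · -- forward direction
    intro hsurj
    -- from surjectivity, for every nonzero u there is c > 0 with c • u ∈ K
    have key : ∀ u : ℝ × ℝ, u ≠ 0 → ∃ c : ℝ, 0 < c ∧ c • u ∈ K := by
      intro u hu
      have : u ∈ (fun l => ((B l) χ₁, (B l) χ₂)) ''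
          {v : N | ∃ a : Fin d → ℝ, (∀ i, 0 ≤ a i) ∧ v = ∑ i, a i • γ i} := by
        rw [hsurj]; trivial
      obtain ⟨v, ⟨a, ha0, rfl⟩, hv⟩ := this
      have hu' : u = ∑ i, a i • p i := by rw [← hv]; exact hlin a
      have hts : (0:ℝ) ≤ ∑ i, a i := Finset.sum_nonneg fun i _ => ha0 i
      have htne : ∑ i, a i ≠ 0 := by
        intro h
        apply hu
        have : ∀ i ∈ Finset.univ, a i = 0 :=
          (Finset.sum_eq_zero_iff_of_nonneg fun i _ => ha0 i).mp h
        rw [hu']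
        exact Finset.sum_eq_zero fun i hi => by rw [this i hi, zero_smul]
      refine ⟨(∑ i, a i)⁻¹, inv_pos.mpr (lt_of_le_of_ne hts (Ne.symm htne)), ?_⟩
      have hc : (∑ i, a i)⁻¹ • u = Finset.univ.centerMass a p := by
        rw [hu', Finset.centerMass]
      rw [hc]
      exact Finset.centerMass_mem_convexHull _ (fun i _ => ha0 i)
        (lt_of_le_of_ne hts (Ne.symm htne)) (fun i _ => Set.mem_range_self i)
    obtain ⟨c₁, hc₁, hk₁⟩ := key (1, 0) (by simp)
    obtain ⟨c₂, hc₂, hk₂⟩ := key (-1, 0) (by simp)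
    obtain ⟨c₃, hc₃, hk₃⟩ := key (0, 1) (by simp)
    obtain ⟨c₄, hc₄, hk₄⟩ := key (0, -1) (by simp)
    have hk₁ : ((c₁, 0) : ℝ × ℝ) ∈ K := by simpa [Prod.smul_mk] using hk₁
    have hk₂ : ((-c₂, 0) : ℝ × ℝ) ∈ K := by simpa [Prod.smul_mk] using hk₂
    have hk₃ : ((0, c₃) : ℝ × ℝ) ∈ K := by simpa [Prod.smul_mk] using hk₃
    have hk₄ : ((0, -c₄) : ℝ × ℝ) ∈ K := by simpa [Prod.smul_mk] using hk₄
    -- 0 ∈ K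
    have h0K : (0 : ℝ × ℝ) ∈ K := by
      have hne : c₁ + c₂ ≠ 0 := by positivity
      have hsum : c₂ / (c₁ + c₂) + c₁ / (c₁ + c₂) = 1 := by
        rw [← add_div, add_comm, div_self hne]
      have := hK hk₁ hk₂ (by positivity) (by positivity) hsum
      have heq : (c₂ / (c₁ + c₂)) • ((c₁, 0) : ℝ × ℝ)
          + (c₁ / (c₁ + c₂)) • ((-c₂, 0) : ℝ × ℝ) = 0 := by
        refine Prod.ext ?_ ?_ <;> simp [Prod.smul_mk] <;> field_simp <;> ring
      rwa [heq] at this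
    -- ball of radius r around 0 is inside K
    set r : ℝ := min (min c₁ c₂) (min c₃ c₄) / 2 with hr
    have hrpos : 0 < r := by
      have := lt_min (lt_min hc₁ hc₂) (lt_min hc₃ hc₄)
      positivity
    have hball : Metric.ball (0 : ℝ × ℝ) r ⊆ K := by
      rintro ⟨x, y⟩ hxy
      have hx : |x| < r := by
        have h1 := norm_fst_le ((x, y) : ℝ × ℝ)
        have h2 : ‖((x, y) : ℝ × ℝ)‖ < r := by
          simpa [Metric.mem_ball, dist_eq_norm] using hxy
        calc |x| = ‖x‖ := (Real.norm_eq_abs x).symm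
        _ ≤ ‖((x, y) : ℝ × ℝ)‖ := h1
        _ < r := h2
      have hy : |y| < r := by
        have h1 := norm_snd_le ((x, y) : ℝ × ℝ)
        have h2 : ‖((x, y) : ℝ × ℝ)‖ < r := by
          simpa [Metric.mem_ball, dist_eq_norm] using hxy
        calc |y| = ‖y‖ := (Real.norm_eq_abs y).symm
        _ ≤ ‖((x, y) : ℝ × ℝ)‖ := h1
        _ < r := h2
      have hm₁ : min (min c₁ c₂) (min c₃ c₄) ≤ c₁ := (min_le_left _ _).trans (min_le_left _ _)
      have hm₂ : min (min c₁ c₂) (min c₃ c₄) ≤ c₂ := (min_le_left _ _).trans (min_le_right _ _)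
      have hm₃ : min (min c₁ c₂) (min c₃ c₄) ≤ c₃ := (min_le_right _ _).trans (min_le_left _ _)
      have hm₄ : min (min c₁ c₂) (min c₃ c₄) ≤ c₄ := (min_le_right _ _).trans (min_le_right _ _)
      have hrc₁ : r ≤ c₁ / 2 := by rw [hr]; linarith
      have hrc₂ : r ≤ c₂ / 2 := by rw [hr]; linarith
      have hrc₃ : r ≤ c₃ / 2 := by rw [hr]; linarith
      have hrc₄ : r ≤ c₄ / 2 := by rw [hr]; linarith
      -- choose directions
      rcases le_total 0 x with hx0 | hx0 <;> rcases le_total 0 y with hy0 | hy0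
      · have := aux_combo hK h0K hk₁ hk₃ (s := x / c₁) (t := y / c₃)
          (div_nonneg hx0 hc₁.le) (div_nonneg hy0 hc₃.le)
          (by
            have h1 : x / c₁ ≤ 1 / 2 := by
              rw [div_le_div_iff₀ hc₁ two_pos]
              nlinarith [abs_of_nonneg hx0 ▸ hx]
            have h2 : y / c₃ ≤ 1 / 2 := by
              rw [div_le_div_iff₀ hc₃ two_pos]
              nlinarith [abs_of_nonneg hy0 ▸ hy]
            linarith)
        have heq : (x / c₁) • ((c₁, 0) : ℝ × ℝ) + (y / c₃) • ((0, c₃) : ℝ × ℝ) = (x, y) := by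
          refine Prod.ext ?_ ?_ <;> simp [Prod.smul_mk] <;> field_simp
        rwa [heq] at this
      · have := aux_combo hK h0K hk₁ hk₄ (s := x / c₁) (t := -y / c₄)
          (div_nonneg hx0 hc₁.le) (div_nonneg (neg_nonneg.mpr hy0) hc₄.le)
          (by
            have h1 : x / c₁ ≤ 1 / 2 := by
              rw [div_le_div_iff₀ hc₁ two_pos]
              nlinarith [abs_of_nonneg hx0 ▸ hx]
            have h2 : -y / c₄ ≤ 1 / 2 := by
              rw [div_le_div_iff₀ hc₄ two_pos]
              nlinarith [abs_of_nonpos hy0 ▸ hy]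
            linarith)
        have heq : (x / c₁) • ((c₁, 0) : ℝ × ℝ) + (-y / c₄) • ((0, -c₄) : ℝ × ℝ) = (x, y) := by
          refine Prod.ext ?_ ?_ <;> simp [Prod.smul_mk] <;> field_simp
        rwa [heq] at this
      · have := aux_combo hK h0K hk₂ hk₃ (s := -x / c₂) (t := y / c₃)
          (div_nonneg (neg_nonneg.mpr hx0) hc₂.le) (div_nonneg hy0 hc₃.le)
          (by
            have h1 : -x / c₂ ≤ 1 / 2 := by
              rw [div_le_div_iff₀ hc₂ two_pos]
              nlinarith [abs_of_nonpos hx0 ▸ hx]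
            have h2 : y / c₃ ≤ 1 / 2 := by
              rw [div_le_div_iff₀ hc₃ two_pos]
              nlinarith [abs_of_nonneg hy0 ▸ hy]
            linarith)
        have heq : (-x / c₂) • ((-c₂, 0) : ℝ × ℝ) + (y / c₃) • ((0, c₃) : ℝ × ℝ) = (x, y) := by
          refine Prod.ext ?_ ?_ <;> simp [Prod.smul_mk] <;> field_simp <;> ring
        rwa [heq] at this
      · have := aux_combo hK h0K hk₂ hk₄ (s := -x / c₂) (t := -y / c₄)
          (div_nonneg (neg_nonneg.mpr hx0) hc₂.le) (div_nonneg (neg_nonneg.mpr hy0) hc₄.le)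
          (by
            have h1 : -x / c₂ ≤ 1 / 2 := by
              rw [div_le_div_iff₀ hc₂ two_pos]
              nlinarith [abs_of_nonpos hx0 ▸ hx]
            have h2 : -y / c₄ ≤ 1 / 2 := by
              rw [div_le_div_iff₀ hc₄ two_pos]
              nlinarith [abs_of_nonpos hy0 ▸ hy]
            linarith)
        have heq : (-x / c₂) • ((-c₂, 0) : ℝ × ℝ) + (-y / c₄) • ((0, -c₄) : ℝ × ℝ)
            = (x, y) := by
          refine Prod.ext ?_ ?_ <;> simp [Prod.smul_mk] <;> field_simp <;> ring
        rwa [heq] at this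
    have : Metric.ball (0 : ℝ × ℝ) r ⊆ interior K :=
      interior_maximal hball Metric.isOpen_ball
    exact this (Metric.mem_ball_self hrpos)
  · -- backward direction
    intro h0
    apply Set.eq_univ_of_forall
    intro v
    have hKnhds : K ∈ nhds (0 : ℝ × ℝ) := mem_interior_iff_mem_nhds.mp h0
    obtain ⟨ε, hε, hballK⟩ := Metric.mem_nhds_iff.mp hKnhds
    set c : ℝ := ε / (2 * (‖v‖ + 1)) with hc
    have hvn : (0:ℝ) < ‖v‖ + 1 := by positivity
    have hcpos : 0 < c := by positivity
    have hcv : c • v ∈ K := by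
      apply hballK
      simp only [Metric.mem_ball, dist_zero_right, norm_smul, Real.norm_eq_abs,
        abs_of_pos hcpos]
      calc c * ‖v‖ ≤ c * (‖v‖ + 1) := by nlinarith [norm_nonneg v]
      _ = ε / 2 := by rw [hc]; field_simp
      _ < ε := by linarith
    rw [hKdef, convexHull_range_eq_exists_affineCombination] at hcv
    obtain ⟨s, w, hw0, hw1, haff⟩ := hcv
    rw [Finset.affineCombination_eq_linear_combination s p w hw1] at haff
    set a' : Fin d → ℝ := fun i => if i ∈ s then w i / c else 0 with ha'def
    have ha' : ∀ i, 0 ≤ a' i := by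
      intro i
      by_cases h : i ∈ s
      · simp [ha'def, h, div_nonneg (hw0 i h) hcpos.le]
      · simp [ha'def, h]
    refine ⟨∑ i, a' i • γ i, ⟨a', ha', rfl⟩, ?_⟩
    show ((B (∑ i, a' i • γ i)) χ₁, (B (∑ i, a' i • γ i)) χ₂) = v
    rw [hlin]
    have : ∑ i, a' i • p i = ∑ i ∈ s, (w i / c) • p i := by
      simp only [ha'def, ite_smul, zero_smul]
      exact Fintype.sum_ite_mem s (fun i => (w i / c) • p i)
    rw [this]
    have : ∑ i ∈ s, (w i / c) • p i = c⁻¹ • ∑ i ∈ s, w i • p i := by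
      rw [Finset.smul_sum]
      refine Finset.sum_congr rfl fun i _ => ?_
      rw [smul_smul, div_eq_inv_mul]
    rw [this, haff, smul_smul, inv_mul_cancel₀ hcpos.ne', one_smul]
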